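/- Let n ≥ 2, i, j ∈ [2^n], c ∈ {0,1}, and set x = rg_n(i), y = rg_n(j), with x' and y' the (n−1)-bit prefixes of x and y. Let b = 1 if par(x) + par(y) + c ≥ 2 (as an integer sum) and b = 0 otherwise. Then rg_n((i+j+c) mod 2^n) has (n−1)-bit prefix rg_{n−1}((rg_{n−1}^{-1}(x') + rg_{n−1}^{-1}(y') + b) mod 2^{n−1}), and its last bit equals x_n ⊕ y_n ⊕ b ⊕ c. -/

import Mathlib

instance : Std.Commutative xor := ⟨by decide⟩
instance : Std.Associative xor := ⟨by decide⟩

/-- The parity (xor of all bits) of a bit string. -/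
def par {m : ℕ} (z : Fin m → Bool) : Bool := Finset.univ.fold xor false z

/-- The `n`-bit binary reflected Gray code (first bit is the reflection bit). -/
def rg : (n : ℕ) → ℕ → Fin n → Bool
  | 0, _ => Fin.elim0
  | n + 1, x =>
      Fin.cons (decide (2 ^ n ≤ x)) (rg n (if x < 2 ^ n then x else 2 ^ (n + 1) - 1 - x))

/-- The decoding function of the binary reflected Gray code (`rg n` is a bijection
from `[2^n]` onto `B^n`, and `rgInv n` picks the unique preimage below `2^n`). -/
noncomputable def rgInv (n : ℕ) (x : Fin n → Bool) : ℕ :=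
  sInf {a : ℕ | a < 2 ^ n ∧ rg n a = x}

lemma my_init_cons (n:ℕ) (a:Bool) (v : Fin (n+1) → Bool) :
    Fin.init (Fin.cons a v : Fin (n+2) → Bool) = Fin.cons a (Fin.init v) := by
  funext i
  refine Fin.cases ?_ ?_ i
  · simp [Fin.init]
  · intro k
    simp only [Fin.init, Fin.cons_succ]
    rw [← Fin.succ_castSucc, Fin.cons_succ]

lemma my_cons_last (n:ℕ) (a:Bool) (v : Fin (n+1) → Bool) :
    (Fin.cons a v : Fin (n+2) → Bool) (Fin.last (n+1)) = v (Fin.last n) := by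
  rw [← Fin.succ_last, Fin.cons_succ]

lemma my_par_cons (n:ℕ) (a:Bool) (v : Fin n → Bool) :
    par (Fin.cons a v : Fin (n+1) → Bool) = xor a (par v) := by
  unfold par
  rw [Fin.univ_succ]
  rw [Finset.fold_cons, Finset.fold_map]
  simp [Function.comp_def]

lemma rg_par (n x : ℕ) (hx : x < 2^n) : par (rg n x) = decide (x % 2 = 1) := by
  induction n generalizing x with
  | zero =>
    interval_cases x
    simp [par, rg]
  | succ n ih =>
    have h2 : (2:ℕ)^(n+1) = 2*2^n := by ring
    have hP : (0:ℕ) < 2^n := Nat.pow_pos (by norm_num)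
    rw [rg, my_par_cons]
    by_cases h : x < 2^n
    · rw [if_pos h, ih _ h]
      have : ¬ (2^n ≤ x) := by omega
      simp [this]
    · rw [if_neg h, ih _ (by omega)]
      have h1 : (2^n ≤ x) := by omega
      have h3 : (2^(n+1) - 1 - x) % 2 = 1 - x % 2 := by omega
      rcases Nat.mod_two_eq_zero_or_one x with h4 | h4 <;> simp [h1, h3, h4]

lemma rg_init (n x : ℕ) (hx : x < 2^(n+1)) :
    Fin.init (rg (n+1) x) = rg n (x/2) := by
  induction n generalizing x with
  | zero => funext i; exact i.elim0
  | succ n ih =>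
    have h2 : (2:ℕ)^(n+1) = 2*2^n := by ring
    have h4 : (2:ℕ)^(n+2) = 4*2^n := by ring
    have hP : (0:ℕ) < 2^n := Nat.pow_pos (by norm_num)
    rw [show rg (n+2) x = Fin.cons (decide (2^(n+1) ≤ x))
        (rg (n+1) (if x < 2^(n+1) then x else 2^(n+2) - 1 - x)) from rfl]
    rw [my_init_cons]
    by_cases h : x < 2^(n+1)
    · rw [if_pos h, ih _ h]
      have hlt : x / 2 < 2^n := by omega
      rw [show rg (n+1) (x/2) = Fin.cons (decide (2^n ≤ x/2))
          (rg n (if x/2 < 2^n then x/2 else 2^(n+1) - 1 - x/2)) from rfl]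
      rw [if_pos hlt]
      have : ¬ (2^n ≤ x/2) := by omega
      simp [this, h]
    · rw [if_neg h]
      have hx' : 2^(n+2) - 1 - x < 2^(n+1) := by omega
      rw [ih _ hx']
      have hge : 2^n ≤ x/2 := by omega
      have hlt2 : ¬ (x/2 < 2^n) := by omega
      rw [show rg (n+1) (x/2) = Fin.cons (decide (2^n ≤ x/2))
          (rg n (if x/2 < 2^n then x/2 else 2^(n+1) - 1 - x/2)) from rfl]
      rw [if_neg hlt2]
      have heq : (2^(n+2) - 1 - x) / 2 = 2^(n+1) - 1 - x/2 := by omega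
      simp [heq, hge, h, show 2^(n+1) ≤ x by omega]

lemma rg_last (n x : ℕ) (hx : x < 2^(n+1)) :
    rg (n+1) x (Fin.last n) = xor (decide (x % 2 = 1)) (decide (x / 2 % 2 = 1)) := by
  induction n generalizing x with
  | zero =>
    interval_cases x <;> simp [rg]
  | succ n ih =>
    have h2 : (2:ℕ)^(n+1) = 2*2^n := by ring
    have h4 : (2:ℕ)^(n+2) = 4*2^n := by ring
    have hP : (0:ℕ) < 2^n := Nat.pow_pos (by norm_num)
    rw [show rg (n+2) x = Fin.cons (decide (2^(n+1) ≤ x))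
        (rg (n+1) (if x < 2^(n+1) then x else 2^(n+2) - 1 - x)) from rfl]
    rw [my_cons_last]
    by_cases h : x < 2^(n+1)
    · rw [if_pos h, ih _ h]
    · rw [if_neg h]
      have hx' : 2^(n+2) - 1 - x < 2^(n+1) := by omega
      rw [ih _ hx']
      have e1 : (2^(n+2) - 1 - x) % 2 = 1 - x % 2 := by omega
      have e2 : (2^(n+2) - 1 - x) / 2 % 2 = 1 - x / 2 % 2 := by omega
      rcases Nat.mod_two_eq_zero_or_one x with h5 | h5 <;>
        rcases Nat.mod_two_eq_zero_or_one (x/2) with h6 | h6 <;>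
          simp [e1, e2, h5, h6]

lemma rg_inj (n : ℕ) : ∀ a b : ℕ, a < 2^n → b < 2^n → rg n a = rg n b → a = b := by
  induction n with
  | zero => intro a b ha hb _; omega
  | succ n ih =>
    intro a b ha hb h
    have h0 := congrFun h 0
    simp only [rg, Fin.cons_zero, decide_eq_decide] at h0
    have ht := congrArg Fin.tail h
    simp only [rg, Fin.tail_cons] at ht
    have hP : (0:ℕ) < 2^n := Nat.pow_pos (by norm_num)
    have h2 : (2:ℕ)^(n+1) = 2*2^n := by ring
    by_cases hha : a < 2^n
    · have hhb : b < 2^n := by omega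
      rw [if_pos hha, if_pos hhb] at ht
      exact ih _ _ hha hhb ht
    · have hhb : ¬ b < 2^n := by omega
      rw [if_neg hha, if_neg hhb] at ht
      have := ih _ _ (by omega) (by omega) ht
      omega

lemma rgInv_rg (n x : ℕ) (hx : x < 2^n) : rgInv n (rg n x) = x := by
  have hset : {a : ℕ | a < 2 ^ n ∧ rg n a = rg n x} = {x} := by
    ext a
    simp only [Set.mem_setOf_eq, Set.mem_singleton_iff]
    constructor
    · rintro ⟨h1, h2⟩; exact rg_inj n a x h1 hx h2
    · rintro rfl; exact ⟨hx, rfl⟩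
  rw [rgInv, hset, csInf_singleton]

/-- with `n = m + 1 ≥ 2`: addition of reflected Gray code strings.
With `x = rg_n(i)`, `y = rg_n(j)`, carry-in `c`, and
`b = 1` iff `par(x) + par(y) + c ≥ 2` (integer sum), the `(n-1)`-bit prefix of
`rg_n(i+j+c)` is `rg_{n-1}(rg_{n-1}^{-1}(x') + rg_{n-1}^{-1}(y') + b)` and its last
bit is `x_n ⊕ y_n ⊕ b ⊕ c`. -/
theorem rg_add (m : ℕ) (hm : 1 ≤ m) (i j : ℕ)
    (hi : i < 2 ^ (m + 1)) (hj : j < 2 ^ (m + 1)) (c : Bool) :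
    Fin.init (rg (m + 1) ((i + j + c.toNat) % 2 ^ (m + 1)))
      = rg m ((rgInv m (Fin.init (rg (m + 1) i)) + rgInv m (Fin.init (rg (m + 1) j)) +
          (decide
            (2 ≤ (par (rg (m + 1) i)).toNat + (par (rg (m + 1) j)).toNat + c.toNat)).toNat)
          % 2 ^ m)
    ∧ rg (m + 1) ((i + j + c.toNat) % 2 ^ (m + 1)) (Fin.last m)
      = xor (rg (m + 1) i (Fin.last m))
          (xor (rg (m + 1) j (Fin.last m))
            (xor
              (decide
                (2 ≤ (par (rg (m + 1) i)).toNat + (par (rg (m + 1) j)).toNat + c.toNat))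
              c)) := by
  have h2 : (2:ℕ)^(m+1) = 2*2^m := by ring
  have hP : (0:ℕ) < 2^m := Nat.pow_pos (by norm_num)
  have hdvd : (2:ℕ) ∣ 2^m := dvd_pow_self 2 (by omega)
  have hs : (i + j + c.toNat) % 2^(m+1) < 2^(m+1) := Nat.mod_lt _ (by omega)
  rw [rg_par _ _ hi, rg_par _ _ hj, rg_init _ _ hi, rg_init _ _ hj,
      rgInv_rg _ _ (by omega), rgInv_rg _ _ (by omega),
      rg_init _ _ hs, rg_last _ _ hs, rg_last _ _ hi, rg_last _ _ hj]
  obtain ⟨B, hBval, hBdef⟩ : ∃ B:ℕ, (B = if 2 ≤ i % 2 + j % 2 + c.toNat then 1 else 0) ∧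
      (decide (2 ≤ (decide (i % 2 = 1)).toNat + (decide (j % 2 = 1)).toNat
        + c.toNat)).toNat = B := by
    refine ⟨_, rfl, ?_⟩
    rcases Nat.mod_two_eq_zero_or_one i with h5 | h5 <;>
      rcases Nat.mod_two_eq_zero_or_one j with h6 | h6 <;>
        cases c <;> simp [h5, h6]
  rw [hBdef]
  have hcb : c.toNat < 2 := by cases c <;> simp
  have hB1 : 2*B ≤ i % 2 + j % 2 + c.toNat := by rw [hBval]; split <;> omega
  have hB2 : i % 2 + j % 2 + c.toNat < 2*B + 2 := by rw [hBval]; split <;> omega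
  have ht_lt : (i/2 + j/2 + B) % 2^m < 2^m := Nat.mod_lt _ hP
  have htpar : (i/2 + j/2 + B) % 2^m % 2 = (i/2 + j/2 + B) % 2 :=
    Nat.mod_mod_of_dvd _ hdvd
  have hsval : (i + j + c.toNat) % 2^(m+1)
      = 2*((i/2 + j/2 + B) % 2^m) + (i % 2 + j % 2 + c.toNat - 2*B) := by
    rw [show i + j + c.toNat = 2*(i/2 + j/2 + B) + (i % 2 + j % 2 + c.toNat - 2*B)
        by omega]
    rw [h2, Nat.add_mod, Nat.mul_mod_mul_left,
        Nat.mod_eq_of_lt (show i % 2 + j % 2 + c.toNat - 2*B < 2*2^m by omega)]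
    exact Nat.mod_eq_of_lt (by omega)
  clear hs hdvd
  generalize htg : (i/2 + j/2 + B) % 2^m = t at hsval htpar ht_lt ⊢
  generalize hsg : (i + j + c.toNat) % 2^(m+1) = s at hsval ⊢
  constructor
  · rw [show s/2 = t from by omega]
  · have e1 : s % 2 = i % 2 + j % 2 + c.toNat - 2*B := by omega
    have e2 : s / 2 % 2 = (i/2 % 2 + j/2 % 2 + B) % 2 := by omega
    rw [e1, e2]
    clear e1 e2 hsval htpar ht_lt hB1 hB2 htg hsg hi hj h2 hP hm
    subst hBval
    rcases Nat.mod_two_eq_zero_or_one i with h5 | h5 <;>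
      rcases Nat.mod_two_eq_zero_or_one j with h6 | h6 <;>
        rcases Nat.mod_two_eq_zero_or_one (i/2) with h7 | h7 <;>
          rcases Nat.mod_two_eq_zero_or_one (j/2) with h8 | h8 <;>
            cases c <;>
              simp [h5, h6, h7, h8]
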